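/- arXiv:2411.13062 — 2 statements merged into one kernel-verified Lean document; each statement's English description precedes it below -/
import Mathlib

section
/- Let n ≥ 1, p ∈ ℕ, and Q = (q_{ij}) an n×n symmetric real matrix. Then Σ_{i ∈ [n]^p} Σ_{π ∈ P_2(p), π ≤ ker(i)} ∏_{(U,V) ∈ E(f_π)} q_{i_U, i_V} = Σ_{π ∈ P_2(p)} Σ_{j : blocks(π) → [n]} ∏_{(U,V) ∈ E(f_π)} q_{j(U), j(V)}, and when Q has entries in [−1,1] the right-hand side equals n^{p/2} Σ_{π ∈ P_2(p)} ρ(f_π, w_Q), where w_Q is the step graphon of Q. (This is the exact moment identity τ(S_n^p) = Σ_{π ∈ P_2(p)} ρ(f_π, w_{Q_n}) for a mixed q-Gaussian system.) -/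
open MeasureTheory Filter Topology
open scoped Classical

namespace EpsCLT

/-- Two subsets of `Fin p` (typically blocks of a partition) *cross* if there exist
`i < k < j < l` with `i, j` in one of them and `k, l` in the other. -/
def Crosses {p : ℕ} (B₁ B₂ : Finset (Fin p)) : Prop :=
  ∃ i k j l : Fin p, i < k ∧ k < j ∧ j < l ∧
    ((i ∈ B₁ ∧ j ∈ B₁ ∧ k ∈ B₂ ∧ l ∈ B₂) ∨ (i ∈ B₂ ∧ j ∈ B₂ ∧ k ∈ B₁ ∧ l ∈ B₁))

theorem Crosses.symm {p : ℕ} {B₁ B₂ : Finset (Fin p)} (h : Crosses B₁ B₂) : Crosses B₂ B₁ := by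
  obtain ⟨i, k, j, l, h1, h2, h3, h4⟩ := h
  exact ⟨i, k, j, l, h1, h2, h3, h4.symm⟩

/-- `P` is a pair partition of `Fin p`: every block has two elements and every point lies in
exactly one block. -/
def IsPairPartition {p : ℕ} (P : Finset (Finset (Fin p))) : Prop :=
  (∀ B ∈ P, B.card = 2) ∧ ∀ i : Fin p, ∃! B, B ∈ P ∧ i ∈ B

/-- `P` is a partition of `Fin p`: blocks are nonempty and every point lies in exactly one. -/
def IsPartition {p : ℕ} (P : Finset (Finset (Fin p))) : Prop :=
  (∀ B ∈ P, B.Nonempty) ∧ ∀ i : Fin p, ∃! B, B ∈ P ∧ i ∈ B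

/-- A partition is noncrossing if no two (distinct) blocks cross. -/
def IsNoncrossing {p : ℕ} (P : Finset (Finset (Fin p))) : Prop :=
  ∀ B₁ ∈ P, ∀ B₂ ∈ P, B₁ ≠ B₂ → ¬ Crosses B₁ B₂

/-- The intersection graph `f_π` of a partition: vertices are the blocks, with an edge between
two blocks iff they cross. -/
def interGraph {p : ℕ} (P : Finset (Finset (Fin p))) : SimpleGraph {B // B ∈ P} where
  Adj B₁ B₂ := B₁ ≠ B₂ ∧ Crosses B₁.1 B₂.1
  symm := ⟨fun _ _ h => ⟨Ne.symm h.1, h.2.symm⟩⟩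
  loopless := ⟨fun _ h => h.1 rfl⟩

/-- Product over the edges of a graph (each edge counted once) of a symmetric function of the
endpoints.  The function is symmetrized, so for symmetric `F` each factor is `F u v`. -/
noncomputable def edgeProd {V : Type*} [Fintype V] (f : SimpleGraph V) (F : V → V → ℝ) : ℝ :=
  ∏ e ∈ f.edgeFinset, Sym2.lift ⟨fun u v => (F u v + F v u) / 2, fun u v => by ring⟩ e

/-- Homomorphism density `ρ(f, w)` of a finite simple graph in a graphon `w`. -/
noncomputable def density {V : Type*} [Fintype V] (f : SimpleGraph V) (w : ℝ → ℝ → ℝ) : ℝ :=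
  ∫ x in Set.univ.pi (fun _ : V => Set.Icc (0:ℝ) 1), edgeProd f (fun u v => w (x u) (x v))

/-- The step function of an `n × n` matrix: on the box `[(i-1)/n, i/n) × [(j-1)/n, j/n)`
(0-indexed: `[i/n, (i+1)/n) × [j/n, (j+1)/n)`) it takes the value `Q i j`. -/
noncomputable def stepFn {n : ℕ} (Q : Fin n → Fin n → ℝ) (x y : ℝ) : ℝ :=
  if hx : (⌊x * n⌋).toNat < n ∧ (⌊y * n⌋).toNat < n ∧ 0 ≤ x ∧ 0 ≤ y then
    Q ⟨(⌊x * n⌋).toNat, hx.1⟩ ⟨(⌊y * n⌋).toNat, hx.2.1⟩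
  else 0

/-- The step graphon `w_g` of a finite simple graph on `[n]`. -/
noncomputable def stepGraphon {n : ℕ} (g : SimpleGraph (Fin n)) : ℝ → ℝ → ℝ :=
  stepFn (fun i j => if g.Adj i j then 1 else 0)

/-- The finset of all pair partitions of `Fin p`. -/
noncomputable def pairPartitions (p : ℕ) : Finset (Finset (Finset (Fin p))) :=
  Finset.univ.filter IsPairPartition

/-- `Σ_{π ∈ P₂(p)} ρ(f_π, w)`, the `p`-th moment of the limit law `μ_w`. -/
noncomputable def momentFormula (p : ℕ) (w : ℝ → ℝ → ℝ) : ℝ :=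
  ∑ P ∈ pairPartitions p, density (interGraph P) w

/-- `g`-independence (ε-independence) of a family of unital subalgebras with respect to a state
`τ`, following Młotkowski and Speicher–Wysoczański. -/
def GIndep {A : Type*} [Ring A] [Algebra ℂ A] (τ : A →ₗ[ℂ] ℂ) {ι : Type*}
    (g : SimpleGraph ι) (B : ι → Subalgebra ℂ A) : Prop :=
  (∀ i j : ι, g.Adj i j →
      ∀ a ∈ B i, ∀ b ∈ B j, a * b = b * a ∧ τ (a * b) = τ a * τ b) ∧
  (∀ (k : ℕ) (idx : Fin k → ι),
      (∀ j₁ j₂ : Fin k, j₁ < j₂ → idx j₁ = idx j₂ →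
        ∃ j₃, j₁ < j₃ ∧ j₃ < j₂ ∧ ¬ g.Adj (idx j₁) (idx j₃)) →
      ∀ a : Fin k → A, (∀ j, a j ∈ B (idx j)) → (∀ j, τ (a j) = 0) →
        τ (List.ofFn a).prod = 0)

/-- The finset of graph homomorphisms from `f` to `g`. -/
noncomputable def homFinset {V W : Type*} [Fintype V] [Fintype W] (f : SimpleGraph V)
    (g : SimpleGraph W) : Finset (V → W) :=
  Finset.univ.filter fun φ => ∀ u v, f.Adj u v → g.Adj (φ u) (φ v)

/-- The finset of injective graph homomorphisms from `f` to `g`. -/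
noncomputable def injHomFinset {V W : Type*} [Fintype V] [Fintype W] (f : SimpleGraph V)
    (g : SimpleGraph W) : Finset (V → W) :=
  Finset.univ.filter fun φ => Function.Injective φ ∧ ∀ u v, f.Adj u v → g.Adj (φ u) (φ v)

/-- The number of graph homomorphisms `hom(f, g)`. -/
noncomputable def homCount {V W : Type*} [Fintype V] [Fintype W] (f : SimpleGraph V)
    (g : SimpleGraph W) : ℕ := (homFinset f g).card

/-- Weighted homomorphism density `ρ(f, (g, α))` of `f` in a node-weighted graph `(g, α)`. -/
noncomputable def wHomDensity {V W : Type*} [Fintype V] [Fintype W] (f : SimpleGraph V)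
    (g : SimpleGraph W) (α : W → ℝ) : ℝ :=
  (∑ φ ∈ homFinset f g, ∏ v : V, α (φ v)) / (∑ v : W, α v) ^ (Fintype.card V)

/-- Weighted injective homomorphism density `ρ_inj(f, (g, α))`. -/
noncomputable def wInjHomDensity {V W : Type*} [Fintype V] [Fintype W] (f : SimpleGraph V)
    (g : SimpleGraph W) (α : W → ℝ) : ℝ :=
  (∑ φ ∈ injHomFinset f g, ∏ v : V, α (φ v)) / (∑ v : W, α v) ^ (Fintype.card V)


section AuxLemmas

variable {p : ℕ}

lemma IsPairPartition.nonempty_of_mem {P : Finset (Finset (Fin p))}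
    (hP : IsPairPartition P) {B : Finset (Fin p)} (hB : B ∈ P) : B.Nonempty :=
  Finset.card_pos.1 (by rw [hP.1 B hB]; norm_num)

lemma IsPairPartition.two_mul_card {P : Finset (Finset (Fin p))} (hP : IsPairPartition P) :
    2 * P.card = p := by
  have h1 : (Finset.univ : Finset (Fin p)) = P.biUnion id := by
    ext i
    simp only [Finset.mem_biUnion, id, Finset.mem_univ, true_iff]
    exact (hP.2 i).exists
  have h2 : (P.biUnion id).card = ∑ B ∈ P, B.card := by
    apply Finset.card_biUnion
    intro B₁ h₁ B₂ h₂ hne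
    show Disjoint B₁ B₂
    rw [Finset.disjoint_left]
    intro i hi1 hi2
    exact hne ((hP.2 i).unique ⟨h₁, hi1⟩ ⟨h₂, hi2⟩)
  calc 2 * P.card = ∑ _B ∈ P, 2 := by rw [Finset.sum_const, smul_eq_mul, mul_comm]
    _ = ∑ B ∈ P, B.card := Finset.sum_congr rfl fun B hB => (hP.1 B hB).symm
    _ = (P.biUnion id).card := h2.symm
    _ = (Finset.univ : Finset (Fin p)).card := by rw [← h1]
    _ = p := by simp

/-- The block of a pair partition containing a given point. -/
noncomputable def blockOf {P : Finset (Finset (Fin p))} (hP : IsPairPartition P) (i : Fin p) :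
    {B // B ∈ P} := ⟨(hP.2 i).exists.choose, (hP.2 i).exists.choose_spec.1⟩

lemma mem_blockOf {P : Finset (Finset (Fin p))} (hP : IsPairPartition P) (i : Fin p) :
    i ∈ (blockOf hP i).1 := (hP.2 i).exists.choose_spec.2

lemma blockOf_eq {P : Finset (Finset (Fin p))} (hP : IsPairPartition P) {i : Fin p}
    {B : Finset (Fin p)} (hB : B ∈ P) (hi : i ∈ B) : blockOf hP i = ⟨B, hB⟩ :=
  Subtype.ext ((hP.2 i).unique ⟨(blockOf hP i).2, mem_blockOf hP i⟩ ⟨hB, hi⟩)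

lemma part1_per (n : ℕ) (Q : Fin n → Fin n → ℝ) {P : Finset (Finset (Fin p))}
    (hP : IsPairPartition P) (f : SimpleGraph {B // B ∈ P}) :
    ∑ idx ∈ Finset.univ.filter
        (fun idx : Fin p → Fin n => ∀ B ∈ P, ∀ u ∈ B, ∀ v ∈ B, idx u = idx v),
      edgeProd f (fun U V =>
        if h : U.1.Nonempty ∧ V.1.Nonempty then
          Q (idx (U.1.min' h.1)) (idx (V.1.min' h.2)) else 1)
    = ∑ j : {B // B ∈ P} → Fin n,
        edgeProd f (fun U V => Q (j U) (j V)) := by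
  refine Finset.sum_nbij'
    (fun idx => fun U : {B // B ∈ P} => idx (U.1.min' (hP.nonempty_of_mem U.2)))
    (fun j => fun i => j (blockOf hP i)) (fun _ _ => Finset.mem_univ _) ?_ ?_ ?_ ?_
  · intro j _
    simp only [Finset.mem_filter, Finset.mem_univ, true_and]
    intro B hB u hu v hv
    rw [blockOf_eq hP hB hu, blockOf_eq hP hB hv]
  · intro idx hidx
    simp only [Finset.mem_filter, Finset.mem_univ, true_and] at hidx
    funext i
    exact hidx _ (blockOf hP i).2 _
      (Finset.min'_mem _ (hP.nonempty_of_mem (blockOf hP i).2)) i (mem_blockOf hP i)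
  · intro j _
    funext U
    show j (blockOf hP _) = j U
    rw [blockOf_eq hP U.2 (Finset.min'_mem _ (hP.nonempty_of_mem U.2))]
  · intro idx _
    congr 1
    funext U V
    rw [dif_pos ⟨hP.nonempty_of_mem U.2, hP.nonempty_of_mem V.2⟩]

variable {n : ℕ}

lemma floor_mem_Ico (hn : 0 < n) {i : Fin n} {x : ℝ}
    (hx : x ∈ Set.Ico ((i : ℝ)/n) (((i : ℝ)+1)/n)) :
    (⌊x * n⌋).toNat = (i : ℕ) ∧ 0 ≤ x ∧ x ∈ Set.Ico (0:ℝ) 1 := by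
  have hnR : (0:ℝ) < n := by exact_mod_cast hn
  obtain ⟨h1, h2⟩ := hx
  have hi1 : (i : ℝ) ≤ x * n := by
    rw [div_le_iff₀ hnR] at h1; linarith
  have hi2 : x * n < (i : ℝ) + 1 := by
    rw [lt_div_iff₀ hnR] at h2; linarith
  have hfl : ⌊x * n⌋ = (i : ℕ) := by
    rw [Int.floor_eq_iff]
    constructor
    · exact_mod_cast hi1
    · push_cast; exact_mod_cast hi2
  have hx0 : 0 ≤ x := le_trans (by positivity) h1
  refine ⟨by rw [hfl]; simp, hx0, hx0, ?_⟩
  have : (i : ℝ) + 1 ≤ n := by exact_mod_cast i.2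
  calc x < ((i:ℝ)+1)/n := h2
    _ ≤ (n:ℝ)/n := by gcongr
    _ = 1 := div_self (ne_of_gt hnR)

lemma stepFn_eq (hn : 0 < n) (Q : Fin n → Fin n → ℝ) {i i' : Fin n} {x y : ℝ}
    (hx : x ∈ Set.Ico ((i : ℝ)/n) (((i : ℝ)+1)/n))
    (hy : y ∈ Set.Ico ((i' : ℝ)/n) (((i' : ℝ)+1)/n)) :
    stepFn Q x y = Q i i' := by
  obtain ⟨hfx, hx0, -⟩ := floor_mem_Ico hn hx
  obtain ⟨hfy, hy0, -⟩ := floor_mem_Ico hn hy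
  rw [stepFn, dif_pos ⟨by rw [hfx]; exact i.2, by rw [hfy]; exact i'.2, hx0, hy0⟩]
  congr 1 <;> exact Fin.ext (by simp [hfx, hfy])

lemma Ico_eq_iUnion (hn : 0 < n) :
    Set.Ico (0:ℝ) 1 = ⋃ i : Fin n, Set.Ico ((i : ℝ)/n) (((i : ℝ)+1)/n) := by
  have hnR : (0:ℝ) < n := by exact_mod_cast hn
  ext x
  simp only [Set.mem_iUnion]
  constructor
  · rintro ⟨h0, h1⟩
    have hfl0 : 0 ≤ ⌊x * n⌋ := Int.floor_nonneg.2 (by positivity)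
    have hlt : (⌊x * n⌋).toNat < n := by
      have h2 : x * n < n := by nlinarith
      have h3 : ⌊x * n⌋ < (n : ℤ) := Int.floor_lt.2 (by exact_mod_cast h2)
      omega
    refine ⟨⟨(⌊x * n⌋).toNat, hlt⟩, ?_, ?_⟩
    · rw [div_le_iff₀ hnR]
      calc ((((⌊x * n⌋).toNat : ℕ) : ℝ)) = ((⌊x * n⌋ : ℤ) : ℝ) := by
            exact_mod_cast Int.toNat_of_nonneg hfl0
        _ ≤ x * n := Int.floor_le _
    · rw [lt_div_iff₀ hnR]
      calc x * n < (⌊x * n⌋ : ℝ) + 1 := Int.lt_floor_add_one (x * n)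
        _ = (((⌊x * n⌋).toNat : ℕ) : ℝ) + 1 := by
            exact_mod_cast congrArg (fun z : ℤ => (z:ℝ)+1) (Int.toNat_of_nonneg hfl0).symm
  · rintro ⟨i, hi⟩
    exact (floor_mem_Ico hn hi).2.2

lemma density_stepFn_aux (hn : 0 < n) (Q : Fin n → Fin n → ℝ)
    {V : Type*} [Fintype V] (f : SimpleGraph V) :
    density f (stepFn Q) =
      ∑ j : V → Fin n, ((n : ℝ)⁻¹) ^ (Fintype.card V) * edgeProd f (fun u v => Q (j u) (j v)) := by
  have hnR : (0:ℝ) < n := by exact_mod_cast hn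
  set box : (V → Fin n) → Set (V → ℝ) :=
    fun j => Set.univ.pi fun v => Set.Ico ((j v : ℝ)/n) (((j v : ℝ)+1)/n) with hbox
  have hmeas : ∀ j, MeasurableSet (box j) :=
    fun j => MeasurableSet.univ_pi fun v => measurableSet_Ico
  have hvol : ∀ j, volume (box j) = (ENNReal.ofReal ((n:ℝ)⁻¹)) ^ Fintype.card V := by
    intro j
    rw [hbox]
    rw [volume_pi_pi]
    have : ∀ v : V, volume (Set.Ico ((j v : ℝ)/n) (((j v : ℝ)+1)/n))
        = ENNReal.ofReal ((n:ℝ)⁻¹) := by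
      intro v
      rw [Real.volume_Ico]
      congr 1
      field_simp
      ring
    rw [Finset.prod_congr rfl (fun v _ => this v), Finset.prod_const, Finset.card_univ]
  have hconst : ∀ j, ∀ x ∈ box j,
      edgeProd f (fun u v => stepFn Q (x u) (x v)) = edgeProd f (fun u v => Q (j u) (j v)) := by
    intro j x hx
    have : (fun u v => stepFn Q (x u) (x v)) = fun u v => Q (j u) (j v) := by
      funext u v
      exact stepFn_eq hn Q (hx u (Set.mem_univ u)) (hx v (Set.mem_univ v))
    rw [this]
  have hae : Set.univ.pi (fun _ : V => Set.Icc (0:ℝ) 1) =ᵐ[volume] ⋃ j : V → Fin n, box j := by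
    have hcover : (⋃ j : V → Fin n, box j) = Set.univ.pi fun _ : V => Set.Ico (0:ℝ) 1 := by
      have h0 := Set.iUnion_univ_pi (fun (_ : V) (i : Fin n) =>
        Set.Ico ((i:ℝ)/n) (((i:ℝ)+1)/n))
      rw [hbox]
      exact h0.trans (congrArg _ (funext fun v => (Ico_eq_iUnion hn).symm))
    rw [hcover, MeasureTheory.ae_eq_set]
    constructor
    · refine measure_mono_null (fun x hx => ?_) (t := ⋃ v : V, {x : V → ℝ | x v = 1}) ?_
      · simp only [Set.mem_diff, Set.mem_pi, Set.mem_univ, true_implies] at hx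
        obtain ⟨h1, h2⟩ := hx
        push_neg at h2
        obtain ⟨v, hv⟩ := h2
        simp only [Set.mem_iUnion, Set.mem_setOf_eq]
        refine ⟨v, ?_⟩
        have := h1 v
        rw [Set.mem_Icc] at this
        rw [Set.mem_Ico] at hv
        rcases lt_or_eq_of_le this.2 with h | h
        · exact absurd ⟨this.1, h⟩ hv
        · exact h
      · apply measure_iUnion_null
        intro v
        rw [MeasureTheory.volume_pi]
        exact Measure.pi_hyperplane _ v 1
    · refine measure_mono_null (fun x hx => ?_) (t := (∅ : Set (V → ℝ))) ?_
      · simp only [Set.mem_diff, Set.mem_pi, Set.mem_univ, true_implies] at hx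
        exact absurd (fun v => Set.Ico_subset_Icc_self (hx.1 v)) hx.2
      · exact measure_empty
  rw [density, setIntegral_congr_set hae]
  have hUnion : (⋃ j : V → Fin n, box j) = ⋃ j ∈ (Finset.univ : Finset (V → Fin n)), box j := by
    simp
  rw [hUnion]
  rw [integral_biUnion_finset Finset.univ (fun j _ => hmeas j) ?hdisj (fun j _ => ?hint)]
  case hdisj =>
    intro j₁ _ j₂ _ hne
    obtain ⟨v, hv⟩ := Function.ne_iff.1 hne
    rw [Function.onFun, Set.disjoint_left]
    intro x hx1 hx2
    have h1 := hx1 v (Set.mem_univ v)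
    have h2 := hx2 v (Set.mem_univ v)
    have e1 := (floor_mem_Ico hn h1).1
    have e2 := (floor_mem_Ico hn h2).1
    exact hv (Fin.ext (e1 ▸ e2))
  case hint =>
    refine IntegrableOn.congr_fun ?_ (fun x hx => (hconst j x hx).symm) (hmeas j)
    refine integrableOn_const (lt_top_iff_ne_top.1 ?_)
    rw [hvol]
    exact ENNReal.pow_lt_top ENNReal.ofReal_lt_top
  refine Finset.sum_congr rfl fun j _ => ?_
  rw [setIntegral_congr_fun (hmeas j) (hconst j), setIntegral_const, measureReal_def, hvol, smul_eq_mul]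
  congr 1
  rw [ENNReal.toReal_pow, ENNReal.toReal_ofReal (by positivity)]

end AuxLemmas

/-- Exact moment identity for a mixed `q`-Gaussian system:
`Σ_{i ∈ [n]^p} Σ_{π ∈ P₂(p), π ≤ ker i} ∏_{(U,V) ∈ E(f_π)} q_{i_U, i_V}` equals the sum over pair
partitions `π` and maps `j : blocks(π) → [n]` of `∏_{(U,V) ∈ E(f_π)} q_{j(U), j(V)}`, and for
`Q` with entries in `[-1,1]` the latter equals `n^{p/2} Σ_{π ∈ P₂(p)} ρ(f_π, w_Q)`. -/
theorem mixed_qGaussian_moment_identity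
    (n p : ℕ) (Q : Fin n → Fin n → ℝ) (hQsymm : ∀ i j, Q i j = Q j i) :
    ((∑ idx : Fin p → Fin n,
        ∑ P ∈ (pairPartitions p).filter (fun P => ∀ B ∈ P, ∀ u ∈ B, ∀ v ∈ B, idx u = idx v),
          edgeProd (interGraph P) (fun U V =>
            if h : U.1.Nonempty ∧ V.1.Nonempty then
              Q (idx (U.1.min' h.1)) (idx (V.1.min' h.2)) else 1))
      = ∑ P ∈ pairPartitions p, ∑ j : {B // B ∈ P} → Fin n,
          edgeProd (interGraph P) (fun U V => Q (j U) (j V))) ∧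
    ((∀ i j, Q i j ∈ Set.Icc (-1:ℝ) 1) →
      (∑ P ∈ pairPartitions p, ∑ j : {B // B ∈ P} → Fin n,
          edgeProd (interGraph P) (fun U V => Q (j U) (j V)))
        = Real.sqrt n ^ p * momentFormula p (stepFn Q)) := by
  constructor
  · refine (Finset.sum_comm' (t' := pairPartitions p)
      (s' := fun P => Finset.univ.filter fun idx : Fin p → Fin n =>
        ∀ B ∈ P, ∀ u ∈ B, ∀ v ∈ B, idx u = idx v)
      (fun idx P => by
        simp only [Finset.mem_filter, Finset.mem_univ, true_and]
        tauto)).trans ?_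
    refine Finset.sum_congr rfl fun P hPm => ?_
    have hP : IsPairPartition P := by simpa [pairPartitions] using hPm
    exact part1_per n Q hP (interGraph P)
  · intro _hQ
    rcases Nat.eq_zero_or_pos n with hn | hn
    · subst hn
      rcases Nat.eq_zero_or_pos p with hp0 | hp0
      · subst hp0
        have hpp : pairPartitions 0 = {∅} := by
          ext P
          simp only [pairPartitions, Finset.mem_filter, Finset.mem_univ, true_and,
            Finset.mem_singleton]
          constructor
          · intro hP
            rw [Finset.eq_empty_iff_forall_notMem]
            intro B hB
            have h2 := hP.1 B hB
            have h3 : B ⊆ Finset.univ := Finset.subset_univ B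
            have h4 : B.card ≤ 0 := by simpa using Finset.card_le_card h3
            omega
          · rintro rfl
            exact ⟨fun B hB => absurd hB (Finset.notMem_empty B), fun i => i.elim0⟩
        have hedge : ∀ F, edgeProd (interGraph (∅ : Finset (Finset (Fin 0)))) F = 1 := by
          intro F
          rw [edgeProd, Finset.eq_empty_of_isEmpty (SimpleGraph.edgeFinset _), Finset.prod_empty]
        rw [hpp, momentFormula, hpp, Finset.sum_singleton, Finset.sum_singleton]
        have hlhs : ∑ j : {B // B ∈ (∅ : Finset (Finset (Fin 0)))} → Fin 0,
            edgeProd (interGraph (∅ : Finset (Finset (Fin 0)))) (fun U V => Q (j U) (j V)) = 1 := by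
          rw [Finset.sum_congr rfl (fun j _ => hedge _), Finset.sum_const, Finset.card_univ,
            Fintype.card_unique, one_smul]
        rw [hlhs]
        have hset : Set.univ.pi (fun _ : {B // B ∈ (∅ : Finset (Finset (Fin 0)))} =>
            Set.Icc (0:ℝ) 1) = Set.univ := by
          ext x
          simp only [Set.mem_pi, Set.mem_univ, true_implies, iff_true]
          exact fun v => isEmptyElim v
        rw [density, hset]
        simp only [hedge]
        rw [Measure.restrict_univ, integral_const, smul_eq_mul, mul_one]
        rw [MeasureTheory.volume_pi, measureReal_def, Measure.pi_univ]
        simp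
      · have hz : ∀ P ∈ pairPartitions p,
            (∑ j : {B // B ∈ P} → Fin 0, edgeProd (interGraph P) (fun U V => Q (j U) (j V))) = 0 := by
          intro P hPm
          have hP : IsPairPartition P := by simpa [pairPartitions] using hPm
          haveI : IsEmpty ({B // B ∈ P} → Fin 0) :=
            ⟨fun j => (j (blockOf hP ⟨0, hp0⟩)).elim0⟩
          rw [Finset.univ_eq_empty, Finset.sum_empty]
        rw [Finset.sum_congr rfl hz, Finset.sum_const, smul_zero]
        rw [Nat.cast_zero, Real.sqrt_zero, zero_pow hp0.ne', zero_mul]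
    · rw [momentFormula, Finset.mul_sum]
      refine Finset.sum_congr rfl fun P hPm => ?_
      have hP : IsPairPartition P := by simpa [pairPartitions] using hPm
      rw [density_stepFn_aux hn Q (interGraph P), Finset.mul_sum]
      refine Finset.sum_congr (by congr 1; exact Subsingleton.elim _ _) fun j _ => ?_
      rw [← mul_assoc]
      have hcard : Fintype.card {B // B ∈ P} = P.card := Fintype.card_coe P
      have h2 : 2 * P.card = p := hP.two_mul_card
      have hone : Real.sqrt n ^ p * ((n:ℝ)⁻¹) ^ P.card = 1 := by
        have hs : Real.sqrt n ^ p = (n:ℝ) ^ P.card := by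
          conv_lhs => rw [← h2]
          rw [pow_mul, Real.sq_sqrt (by positivity)]
        rw [hs, ← mul_pow, mul_inv_cancel₀ (by exact_mod_cast hn.ne'), one_pow]
      rw [hcard, hone, one_mul]


end EpsCLT
end

section
/- Let w : [0,1]² → [0,1] be a graphon. For m ∈ ℕ define κ_m(w) := Σ_{π ∈ P_2(m), f_π connected} ρ(f_π, w) (so κ_m(w) = 0 for odd m and κ_2(w) = 1). Then for every p ∈ ℕ, Σ_{π ∈ P_2(p)} ρ(f_π, w) = Σ_{σ ∈ NC(p)} ∏_{V ∈ σ} κ_{|V|}(w), where NC(p) denotes the set of noncrossing partitions of [p]. In other words, the numbers κ_m(w) are the free cumulants of the measure μ_w whose p-th moment is Σ_{π ∈ P_2(p)} ρ(f_π, w). -/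
open MeasureTheory Filter Topology
open scoped Classical

namespace EpsCLT

/-- `κ_m(w) = Σ_{π ∈ P₂(m), f_π connected} ρ(f_π, w)`, the candidate `m`-th free cumulant. -/
noncomputable def connectedPairMoment (m : ℕ) (w : ℝ → ℝ → ℝ) : ℝ :=
  ∑ P ∈ (pairPartitions m).filter (fun P => (interGraph P).Connected),
    density (interGraph P) w
noncomputable section

/-! ### Analytic infrastructure -/

noncomputable def mu0 : Measure ℝ := volume.restrict (Set.Icc 0 1)

instance : IsProbabilityMeasure mu0 := by
  constructor
  simp [mu0, Real.volume_Icc]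

noncomputable def densInt {V : Type*} [Fintype V] (G : SimpleGraph V) (w : ℝ → ℝ → ℝ) : ℝ :=
  ∫ x : V → ℝ, edgeProd G (fun u v => w (x u) (x v)) ∂(Measure.pi fun _ : V => mu0)

theorem density_eq_densInt {V : Type*} [Fintype V] (G : SimpleGraph V) (w : ℝ → ℝ → ℝ) :
    density G w = densInt G w := by
  rw [density, densInt]
  have : (volume : Measure (V → ℝ)).restrict
      (Set.univ.pi fun _ : V => Set.Icc (0:ℝ) 1) = Measure.pi fun _ : V => mu0 := by
    rw [volume_pi]
    refine (Measure.pi_eq fun t ht => ?_).symm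
    rw [Measure.restrict_apply (MeasurableSet.univ_pi ht), ← Set.pi_inter_distrib,
      Measure.pi_pi]
    simp_rw [mu0, Measure.restrict_apply (ht _)]
  rw [← this]

theorem edgeProd_comap {V W : Type*} [Fintype V] [Fintype W] (e : V ≃ W)
    (H : SimpleGraph W) (F : W → W → ℝ) :
    edgeProd H F = edgeProd (H.comap e) (fun u v => F (e u) (e v)) := by
  rw [edgeProd, edgeProd]
  refine (Finset.prod_bij (fun s _ => s.map (e : V → W)) ?_ ?_ ?_ ?_).symm
  · intro s hs
    induction s with
    | _ u v =>
      simp only [SimpleGraph.mem_edgeFinset, SimpleGraph.mem_edgeSet] at hs ⊢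
      simpa using hs
  · intro s hs s' hs' h
    exact Sym2.map.injective e.injective h
  · intro s hs
    induction s with
    | _ u v =>
      refine ⟨s(e.symm u, e.symm v), ?_, ?_⟩
      · simp only [SimpleGraph.mem_edgeFinset, SimpleGraph.mem_edgeSet] at hs ⊢
        simpa using hs
      · simp
  · intro s hs
    induction s with
    | _ u v => simp

theorem densInt_comap {V W : Type*} [Fintype V] [Fintype W] (e : V ≃ W)
    (H : SimpleGraph W) (w : ℝ → ℝ → ℝ) :
    densInt (H.comap e) w = densInt H w := by
  rw [densInt, densInt]
  have mp := MeasureTheory.measurePreserving_piCongrLeft (fun _ : W => mu0) e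
  rw [← mp.integral_comp (MeasurableEquiv.measurableEmbedding _)]
  refine integral_congr_ae (Filter.Eventually.of_forall fun x => ?_)
  have hx : ∀ b : W, (MeasurableEquiv.piCongrLeft (fun _ : W => ℝ) e x) b = x (e.symm b) := by
    intro b
    conv_lhs => rw [← e.apply_symm_apply b]
    rw [MeasurableEquiv.piCongrLeft]
    simp only [Equiv.toFun_as_coe, MeasurableEquiv.coe_mk]
    exact Equiv.piCongrLeft_apply_apply (fun _ => ℝ) e x (e.symm b)
  simp_rw [hx]
  rw [edgeProd_comap e H]
  simp
theorem edgeProd_sigma {V ι : Type*} [Fintype V] [Fintype ι] (c : V → ι) (G : SimpleGraph V)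
    (hedge : ∀ u v, G.Adj u v → c u = c v) (F : V → V → ℝ) :
    edgeProd G F = ∏ a : ι,
      edgeProd (G.comap (Subtype.val : {v // c v = a} → V)) (fun u v => F u.1 v.1) := by
  simp only [edgeProd]
  rw [Finset.prod_sigma']
  refine (Finset.prod_bij (fun x _ => x.2.map (Subtype.val : {v // c v = x.1} → V))
      ?_ ?_ ?_ ?_).symm
  · rintro ⟨a, s⟩ hs
    induction s with
    | _ u v =>
      simp only [Finset.mem_sigma, SimpleGraph.mem_edgeFinset, SimpleGraph.mem_edgeSet] at hs ⊢
      simpa using hs.2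
  · rintro ⟨a, s⟩ hs ⟨a', s'⟩ hs' h
    induction s with
    | _ u v =>
      induction s' with
      | _ u' v' =>
        simp only [Sym2.map_pair_eq, Sym2.eq_iff] at h
        have ha : a = a' := by
          rcases h with ⟨h1, _⟩ | ⟨h1, _⟩
          · rw [← u.2, ← u'.2, h1]
          · rw [← u.2, ← v'.2, h1]
        subst ha
        simp only [Sigma.mk.inj_iff, heq_eq_eq, true_and]
        rcases h with ⟨h1, h2⟩ | ⟨h1, h2⟩
        · rw [Sym2.eq_iff]; left; exact ⟨Subtype.ext h1, Subtype.ext h2⟩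
        · rw [Sym2.eq_iff]; right; exact ⟨Subtype.ext h1, Subtype.ext h2⟩
  · intro s hs
    induction s with
    | _ u v =>
      simp only [SimpleGraph.mem_edgeFinset, SimpleGraph.mem_edgeSet] at hs
      refine ⟨⟨c u, s(⟨u, rfl⟩, ⟨v, (hedge u v hs).symm⟩)⟩, ?_, ?_⟩
      · simp only [Finset.mem_sigma, Finset.mem_univ, true_and,
          SimpleGraph.mem_edgeFinset, SimpleGraph.mem_edgeSet]
        exact hs
      · simp
  · rintro ⟨a, s⟩ hs
    induction s with
    | _ u v => simp

theorem integral_pi_relabel {α β : Type*} [Fintype α] [Fintype β] (e : α ≃ β)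
    (F : (α → ℝ) → ℝ) :
    ∫ y : β → ℝ, F (fun u => y (e u)) ∂(Measure.pi fun _ : β => mu0) =
      ∫ x : α → ℝ, F x ∂(Measure.pi fun _ : α => mu0) := by
  have mp := MeasureTheory.measurePreserving_piCongrLeft (fun _ : β => mu0) e
  rw [← mp.integral_comp (MeasurableEquiv.measurableEmbedding _)]
  refine integral_congr_ae (Filter.Eventually.of_forall fun x => ?_)
  have hx : ∀ u : α, (MeasurableEquiv.piCongrLeft (fun _ : β => ℝ) e x) (e u) = x u := by
    intro u
    rw [MeasurableEquiv.piCongrLeft]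
    simp only [Equiv.toFun_as_coe, MeasurableEquiv.coe_mk]
    exact Equiv.piCongrLeft_apply_apply (fun _ => ℝ) e x u
  simp_rw [hx]

theorem split_integral {ι : Type*} (s : Finset ι) :
    ∀ (V : Type) [Fintype V] (c : V → ι), (∀ v, c v ∈ s) →
    ∀ (F : ∀ a, ({v : V // c v = a} → ℝ) → ℝ),
    (∫ x : V → ℝ, ∏ a ∈ s, F a (fun v => x v.1) ∂(Measure.pi fun _ : V => mu0)) =
      ∏ a ∈ s, ∫ y : {v : V // c v = a} → ℝ, F a y
        ∂(Measure.pi fun _ : {v : V // c v = a} => mu0) := by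
  induction s using Finset.induction with
  | empty =>
    intro V _ c hc F
    simp
  | @insert a s ha ih =>
    intro V _ c hc F
    set V' := {v : V // ¬ (c v = a)} with hV'
    set c' : V' → ι := fun v => c v.1 with hc'def
    have hc' : ∀ v : V', c' v ∈ s := by
      rintro ⟨v, hv⟩
      rcases Finset.mem_insert.1 (hc v) with h | h
      · exact absurd h hv
      · exact h
    set F' : ∀ a', ({u : V' // c' u = a'} → ℝ) → ℝ := fun a' y =>
      F a' (fun v => if h : ¬ (c v.1 = a) then y ⟨⟨v.1, h⟩, v.2⟩ else 0) with hF'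
    have e := MeasurableEquiv.piEquivPiSubtypeProd (fun _ : V => ℝ) (fun v => c v = a)
    have mp := MeasureTheory.measurePreserving_piEquivPiSubtypeProd
      (fun _ : V => mu0) (fun v => c v = a)
    set g : ({v : V // c v = a} → ℝ) × (V' → ℝ) → ℝ := fun z =>
      F a z.1 * ∏ a' ∈ s, F' a' (fun u => z.2 u.1) with hg
    have key : ∀ x : V → ℝ,
        (∏ a' ∈ Insert.insert a s, F a' (fun v => x v.1)) =
        g (MeasurableEquiv.piEquivPiSubtypeProd (fun _ : V => ℝ) (fun v => c v = a) x) := by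
      intro x
      rw [Finset.prod_insert ha, hg]
      simp only [MeasurableEquiv.piEquivPiSubtypeProd, Equiv.piEquivPiSubtypeProd,
        MeasurableEquiv.coe_mk, Equiv.coe_fn_mk]
      congr 1
      refine Finset.prod_congr rfl fun a' ha' => ?_
      rw [hF']
      congr 1
      funext v
      have hne : ¬ (c v.1 = a) := by
        rw [v.2]; rintro rfl; exact ha ha'
      rw [dif_pos hne]
    simp_rw [key]
    rw [mp.integral_comp (MeasurableEquiv.measurableEmbedding _) g]
    rw [hg, integral_prod_mul (μ := Measure.pi fun _ : {v : V // c v = a} => mu0)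
      (ν := Measure.pi fun _ : V' => mu0) (fun y => F a y)
      (fun x' => ∏ a' ∈ s, F' a' (fun u => x' u.1))]
    rw [ih V' c' hc' F']
    rw [Finset.prod_insert ha]
    congr 1
    refine Finset.prod_congr rfl fun a' ha' => ?_
    let he : ({u : V' // c' u = a'} ≃ {v : V // c v = a'}) :=
      { toFun := fun u => ⟨u.1.1, u.2⟩
        invFun := fun v => ⟨⟨v.1, by rw [v.2]; rintro rfl; exact ha ha'⟩, v.2⟩
        left_inv := fun u => rfl
        right_inv := fun v => rfl }
    rw [← integral_pi_relabel he.symm (F a')]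
    refine integral_congr_ae (Filter.Eventually.of_forall fun y => ?_)
    show F' a' y = F a' fun u => y (he.symm u)
    rw [hF']
    beta_reduce
    congr 1
    funext v
    have hne : ¬ (c v.1 = a) := by
      rw [v.2]; rintro rfl; exact ha ha'
    rw [dif_pos hne]
    rfl


section Combinatorics

variable {p : ℕ}

theorem IsPairPartition.isPartition {P : Finset (Finset (Fin p))} (h : IsPairPartition P) :
    IsPartition P :=
  ⟨fun B hB => Finset.card_pos.1 (by rw [h.1 B hB]; norm_num), h.2⟩

theorem block_eq_of_mem {P : Finset (Finset (Fin p))} (hP : IsPartition P)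
    {B B' : Finset (Fin p)} (hB : B ∈ P) (hB' : B' ∈ P) {i : Fin p}
    (hi : i ∈ B) (hi' : i ∈ B') : B = B' := by
  obtain ⟨C, _, hun⟩ := hP.2 i
  rw [hun B ⟨hB, hi⟩, hun B' ⟨hB', hi'⟩]

theorem Crosses.mono {B₁ B₂ A₁ A₂ : Finset (Fin p)} (h : Crosses B₁ B₂)
    (h1 : B₁ ⊆ A₁) (h2 : B₂ ⊆ A₂) : Crosses A₁ A₂ := by
  obtain ⟨i, k, j, l, hik, hkj, hjl, hm⟩ := h
  refine ⟨i, k, j, l, hik, hkj, hjl, ?_⟩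
  rcases hm with ⟨a, b, c, d⟩ | ⟨a, b, c, d⟩
  · exact Or.inl ⟨h1 a, h1 b, h2 c, h2 d⟩
  · exact Or.inr ⟨h2 a, h2 b, h1 c, h1 d⟩

theorem not_crosses_in_out {c d : Fin p} {B B' : Finset (Fin p)}
    (hin : ∀ x ∈ B, c < x ∧ x < d) (hout : ∀ x ∈ B', x < c ∨ d < x) :
    ¬ Crosses B B' := by
  rintro ⟨i, k, j, l, hik, hkj, hjl, ⟨hi, hj, hk, hl⟩ | ⟨hi, hj, hk, hl⟩⟩
  · rcases hout k hk with h | h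
    · exact absurd ((hin i hi).1.trans hik) (not_lt.2 h.le)
    · exact absurd (hkj.trans (hin j hj).2) (not_lt.2 h.le)
  · rcases hout i hi with h | h
    · rcases hout j hj with h' | h'
      · exact absurd (hkj.trans h') (not_lt.2 (hin k hk).1.le)
      · exact absurd (h'.trans hjl) (not_lt.2 (hin l hl).2.le)
    · exact absurd (h.trans (hik.trans (hin k hk).2)) (lt_irrefl d)

theorem reach_in {P : Finset (Finset (Fin p))} {c d : Fin p} {B₀ B₁ : {B // B ∈ P}}
    (h : (interGraph P).Reachable B₀ B₁)
    (H : ∀ B : {B // B ∈ P}, (interGraph P).Reachable B₀ B →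
      (∀ x ∈ B.1, c < x ∧ x < d) ∨ (∀ x ∈ B.1, x < c ∨ d < x))
    (hin : ∀ x ∈ B₀.1, c < x ∧ x < d) : ∀ x ∈ B₁.1, c < x ∧ x < d := by
  rw [SimpleGraph.reachable_iff_reflTransGen] at h
  induction h with
  | refl => exact hin
  | @tail b e hr hadj ih =>
    rcases H e ((SimpleGraph.reachable_iff_reflTransGen _ _).2 (hr.tail hadj)) with h1 | h2
    · exact h1
    · exact absurd hadj.2 (not_crosses_in_out ih h2)

theorem exists_split {P : Finset (Finset (Fin p))} {c d : Fin p}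
    {B₀ Bin Bout : {B // B ∈ P}}
    (hRin : (interGraph P).Reachable B₀ Bin) (hRout : (interGraph P).Reachable B₀ Bout)
    (hcd : ∀ B : {B // B ∈ P}, (interGraph P).Reachable B₀ B → c ∉ B.1 ∧ d ∉ B.1)
    (hin : ∃ x ∈ Bin.1, c < x ∧ x < d) (hout : ∃ y ∈ Bout.1, y < c ∨ d < y) :
    ∃ B, (interGraph P).Reachable B₀ B ∧ (∃ x ∈ B.1, c < x ∧ x < d) ∧
      (∃ y ∈ B.1, y < c ∨ d < y) := by
  by_contra hcon
  have H : ∀ B : {B // B ∈ P}, (interGraph P).Reachable B₀ B →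
      (∀ x ∈ B.1, c < x ∧ x < d) ∨ (∀ x ∈ B.1, x < c ∨ d < x) := by
    intro B hR
    have hcls : ∀ x ∈ B.1, (c < x ∧ x < d) ∨ (x < c ∨ d < x) := by
      intro x hx
      rcases hcd B hR with ⟨hc', hd'⟩
      rcases lt_trichotomy x c with h | h | h
      · exact Or.inr (Or.inl h)
      · exact absurd (h ▸ hx) hc'
      · rcases lt_trichotomy x d with h' | h' | h'
        · exact Or.inl ⟨h, h'⟩
        · exact absurd (h' ▸ hx) hd'
        · exact Or.inr (Or.inr h')
    by_cases hex : ∃ x ∈ B.1, c < x ∧ x < d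
    · left
      intro y hy
      rcases hcls y hy with h | h
      · exact h
      · exact absurd ⟨B, hR, hex, ⟨y, hy, h⟩⟩ hcon
    · right
      intro x hx
      rcases hcls x hx with h | h
      · exact absurd ⟨x, hx, h⟩ hex
      · exact h
  obtain ⟨x0, hx0, hx0'⟩ := hin
  have hInBin : ∀ x ∈ Bin.1, c < x ∧ x < d := by
    rcases H Bin hRin with h | h
    · exact h
    · rcases h x0 hx0 with h' | h'
      · exact absurd (h'.trans hx0'.1) (lt_irrefl x0)
      · exact absurd (hx0'.2.trans h') (lt_irrefl x0)
  have hInBout := reach_in (hRin.symm.trans hRout)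
    (fun B hB => H B (hRin.trans hB)) hInBin
  obtain ⟨y0, hy0, hy0'⟩ := hout
  rcases hy0' with h | h
  · exact absurd ((hInBout y0 hy0).1.trans h) (lt_irrefl c)
  · exact absurd (h.trans (hInBout y0 hy0).2) (lt_irrefl d)

noncomputable def compUnion (P : Finset (Finset (Fin p))) (B₀ : {B // B ∈ P}) :
    Finset (Fin p) :=
  Finset.univ.filter (fun x => ∃ B : {B // B ∈ P}, (interGraph P).Reachable B₀ B ∧ x ∈ B.1)

theorem mem_compUnion {P : Finset (Finset (Fin p))} {B₀ : {B // B ∈ P}} {x : Fin p} :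
    x ∈ compUnion P B₀ ↔ ∃ B : {B // B ∈ P}, (interGraph P).Reachable B₀ B ∧ x ∈ B.1 := by
  simp [compUnion]

theorem block_subset_compUnion {P : Finset (Finset (Fin p))} {B₀ B : {B // B ∈ P}}
    (h : (interGraph P).Reachable B₀ B) : B.1 ⊆ compUnion P B₀ :=
  fun x hx => mem_compUnion.2 ⟨B, h, hx⟩

theorem self_subset_compUnion {P : Finset (Finset (Fin p))} (B₀ : {B // B ∈ P}) :
    B₀.1 ⊆ compUnion P B₀ :=
  block_subset_compUnion (SimpleGraph.Reachable.refl _)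

theorem compUnion_eq_of_reach {P : Finset (Finset (Fin p))} {B₀ B₁ : {B // B ∈ P}}
    (h : (interGraph P).Reachable B₀ B₁) : compUnion P B₀ = compUnion P B₁ := by
  ext x
  simp only [mem_compUnion]
  exact ⟨fun ⟨B, hR, hx⟩ => ⟨B, h.symm.trans hR, hx⟩, fun ⟨B, hR, hx⟩ => ⟨B, h.trans hR, hx⟩⟩

theorem reach_of_mem_compUnion {P : Finset (Finset (Fin p))} (hP : IsPartition P)
    {B₀ B : {B // B ∈ P}} {x : Fin p} (hx : x ∈ B.1) (hx' : x ∈ compUnion P B₀) :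
    (interGraph P).Reachable B₀ B := by
  obtain ⟨B', hR, hxB'⟩ := mem_compUnion.1 hx'
  have : B' = B := Subtype.ext (block_eq_of_mem hP B'.2 B.2 hxB' hx)
  rwa [this] at hR

theorem aux_noncross {P : Finset (Finset (Fin p))} (hP : IsPartition P)
    {B₁ B₂ : {B // B ∈ P}} (hnr : ¬ (interGraph P).Reachable B₁ B₂)
    {i k j l : Fin p} (hik : i < k) (hkj : k < j) (hjl : j < l)
    (hi : i ∈ compUnion P B₁) (hj : j ∈ compUnion P B₁)
    (hk : k ∈ compUnion P B₂) (hl : l ∈ compUnion P B₂) : False := by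
  obtain ⟨Bi, hRBi, hiBi⟩ := mem_compUnion.1 hi
  obtain ⟨Bj, hRBj, hjBj⟩ := mem_compUnion.1 hj
  obtain ⟨Bk, hRBk, hkBk⟩ := mem_compUnion.1 hk
  obtain ⟨Bl, hRBl, hlBl⟩ := mem_compUnion.1 hl
  have hdisj : ∀ x : Fin p, x ∈ compUnion P B₁ →
      ∀ B : {B // B ∈ P}, (interGraph P).Reachable B₂ B → x ∉ B.1 := by
    intro x hx B hR hxB
    exact hnr ((reach_of_mem_compUnion hP hxB hx).trans hR.symm)
  have hdisj' : ∀ x : Fin p, x ∈ compUnion P B₂ →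
      ∀ B : {B // B ∈ P}, (interGraph P).Reachable B₁ B → x ∉ B.1 := by
    intro x hx B hR hxB
    exact hnr (hR.trans (reach_of_mem_compUnion hP hxB hx).symm)
  have hcd2 : ∀ B : {B // B ∈ P}, (interGraph P).Reachable B₂ B → i ∉ B.1 ∧ j ∉ B.1 :=
    fun B hR => ⟨hdisj i hi B hR, hdisj j hj B hR⟩
  obtain ⟨B', hRB', ⟨x, hxB', hxij⟩, ⟨y, hyB', hyout⟩⟩ :=
    exists_split hRBk hRBl hcd2 ⟨k, hkBk, hik, hkj⟩ ⟨l, hlBl, Or.inr hjl⟩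
  have hxU : x ∈ compUnion P B₂ := mem_compUnion.2 ⟨B', hRB', hxB'⟩
  have hyU : y ∈ compUnion P B₂ := mem_compUnion.2 ⟨B', hRB', hyB'⟩
  have hcd1 : ∀ B : {B // B ∈ P}, (interGraph P).Reachable B₁ B → x ∉ B.1 ∧ y ∉ B.1 :=
    fun B hR => ⟨hdisj' x hxU B hR, hdisj' y hyU B hR⟩
  have hfin : ∀ (B : {B // B ∈ P}), (interGraph P).Reachable B₁ B →
      Crosses B.1 B'.1 → False := by
    intro B hRB hcross
    have hne : B ≠ B' := by
      rintro rfl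
      exact hnr (hRB.trans hRB'.symm)
    have hadj : (interGraph P).Adj B B' := ⟨hne, hcross⟩
    exact hnr (hRB.trans (hadj.reachable.trans hRB'.symm))
  rcases hyout with hy | hy
  · -- y < i : interval (y, x)
    have hcd1' : ∀ B : {B // B ∈ P}, (interGraph P).Reachable B₁ B → y ∉ B.1 ∧ x ∉ B.1 :=
      fun B hR => ⟨(hcd1 B hR).2, (hcd1 B hR).1⟩
    obtain ⟨B, hRB, ⟨a, haB, hay⟩, ⟨b, hbB, hbout⟩⟩ :=
      exists_split hRBi hRBj hcd1' ⟨i, hiBi, hy, hxij.1⟩ ⟨j, hjBj, Or.inr hxij.2⟩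
    refine hfin B hRB ?_
    rcases hbout with hb | hb
    · exact ⟨b, y, a, x, hb, hay.1, hay.2, Or.inl ⟨hbB, haB, hyB', hxB'⟩⟩
    · exact ⟨y, a, x, b, hay.1, hay.2, hb, Or.inr ⟨hyB', hxB', haB, hbB⟩⟩
  · -- j < y : interval (x, y)
    obtain ⟨B, hRB, ⟨a, haB, hax⟩, ⟨b, hbB, hbout⟩⟩ :=
      exists_split hRBj hRBi hcd1 ⟨j, hjBj, hxij.2, hy⟩ ⟨i, hiBi, Or.inl hxij.1⟩
    refine hfin B hRB ?_
    rcases hbout with hb | hb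
    · exact ⟨b, x, a, y, hb, hax.1, hax.2, Or.inl ⟨hbB, haB, hxB', hyB'⟩⟩
    · exact ⟨x, a, y, b, hax.1, hax.2, hb, Or.inr ⟨hxB', hyB', haB, hbB⟩⟩

noncomputable def closure (P : Finset (Finset (Fin p))) : Finset (Finset (Fin p)) :=
  P.attach.image (compUnion P)

theorem mem_closure {P : Finset (Finset (Fin p))} {A : Finset (Fin p)} :
    A ∈ closure P ↔ ∃ B : {B // B ∈ P}, compUnion P B = A := by
  simp [closure]

theorem closure_isPartition {P : Finset (Finset (Fin p))} (hP : IsPartition P) :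
    IsPartition (closure P) := by
  constructor
  · intro A hA
    obtain ⟨B₀, rfl⟩ := mem_closure.1 hA
    obtain ⟨x, hx⟩ := hP.1 B₀.1 B₀.2
    exact ⟨x, self_subset_compUnion B₀ hx⟩
  · intro i
    obtain ⟨B, ⟨hB, hiB⟩, huniq⟩ := hP.2 i
    refine ⟨compUnion P ⟨B, hB⟩, ⟨mem_closure.2 ⟨⟨B, hB⟩, rfl⟩,
      self_subset_compUnion _ hiB⟩, ?_⟩
    rintro A ⟨hA, hiA⟩
    obtain ⟨B₀, rfl⟩ := mem_closure.1 hA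
    exact compUnion_eq_of_reach (reach_of_mem_compUnion hP hiB hiA)

theorem closure_noncrossing {P : Finset (Finset (Fin p))} (hP : IsPartition P) :
    IsNoncrossing (closure P) := by
  intro A₁ hA₁ A₂ hA₂ hne hcr
  obtain ⟨B₁, rfl⟩ := mem_closure.1 hA₁
  obtain ⟨B₂, rfl⟩ := mem_closure.1 hA₂
  have hnr : ¬ (interGraph P).Reachable B₁ B₂ := fun h => hne (compUnion_eq_of_reach h)
  obtain ⟨i, k, j, l, hik, hkj, hjl, ⟨hi, hj, hk, hl⟩ | ⟨hi, hj, hk, hl⟩⟩ := hcr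
  · exact aux_noncross hP hnr hik hkj hjl hi hj hk hl
  · exact aux_noncross hP (fun h => hnr h.symm) hik hkj hjl hi hj hk hl

/-! ### order embedding of a block -/

noncomputable def emb (A : Finset (Fin p)) : Fin A.card → Fin p :=
  fun i => (A.orderIsoOfFin rfl i).1

theorem emb_strictMono {A : Finset (Fin p)} : StrictMono (emb A) := by
  intro i j h
  exact (A.orderIsoOfFin rfl).lt_iff_lt.2 h

theorem emb_mem {A : Finset (Fin p)} (i : Fin A.card) : emb A i ∈ A :=
  (A.orderIsoOfFin rfl i).2

theorem emb_inj {A : Finset (Fin p)} : Function.Injective (emb A) :=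
  emb_strictMono.injective

theorem emb_surj {A : Finset (Fin p)} {x : Fin p} (hx : x ∈ A) : ∃ i, emb A i = x := by
  let y : {z // z ∈ A} := ⟨x, hx⟩
  exact ⟨(A.orderIsoOfFin rfl).symm y,
    congrArg Subtype.val ((A.orderIsoOfFin rfl).apply_symm_apply y)⟩

noncomputable def up (A : Finset (Fin p)) (b : Finset (Fin A.card)) : Finset (Fin p) :=
  b.image (emb A)

noncomputable def down (A : Finset (Fin p)) (B : Finset (Fin p)) : Finset (Fin A.card) :=
  Finset.univ.filter (fun i => emb A i ∈ B)

theorem mem_up {A : Finset (Fin p)} {b : Finset (Fin A.card)} {x : Fin p} :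
    x ∈ up A b ↔ ∃ i ∈ b, emb A i = x := by simp [up]

theorem mem_down {A : Finset (Fin p)} {B : Finset (Fin p)} {i : Fin A.card} :
    i ∈ down A B ↔ emb A i ∈ B := by simp [down]

theorem up_subset {A : Finset (Fin p)} {b : Finset (Fin A.card)} : up A b ⊆ A := by
  intro x hx
  obtain ⟨i, _, rfl⟩ := mem_up.1 hx
  exact emb_mem i

theorem down_up {A : Finset (Fin p)} (b : Finset (Fin A.card)) : down A (up A b) = b := by
  ext i
  simp only [mem_down, mem_up]
  exact ⟨fun ⟨i', hi', h⟩ => emb_inj h ▸ hi', fun h => ⟨i, h, rfl⟩⟩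

theorem up_down {A B : Finset (Fin p)} (h : B ⊆ A) : up A (down A B) = B := by
  ext x
  simp only [mem_up, mem_down]
  constructor
  · rintro ⟨i, hi, rfl⟩
    exact hi
  · intro hx
    obtain ⟨i, rfl⟩ := emb_surj (h hx)
    exact ⟨i, hx, rfl⟩

theorem up_injective {A : Finset (Fin p)} : Function.Injective (up A) := by
  intro b b' h
  rw [← down_up (A := A) b, ← down_up (A := A) b', h]

theorem card_up {A : Finset (Fin p)} (b : Finset (Fin A.card)) : (up A b).card = b.card :=
  Finset.card_image_of_injective b emb_inj

theorem crosses_image {m : ℕ} {f : Fin m → Fin p} (hf : StrictMono f)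
    {b b' : Finset (Fin m)} : Crosses (b.image f) (b'.image f) ↔ Crosses b b' := by
  constructor
  · rintro ⟨i, k, j, l, hik, hkj, hjl, hm⟩
    rcases hm with ⟨hi, hj, hk, hl⟩ | ⟨hi, hj, hk, hl⟩
    · obtain ⟨i₀, hi₀, rfl⟩ := Finset.mem_image.1 hi
      obtain ⟨j₀, hj₀, rfl⟩ := Finset.mem_image.1 hj
      obtain ⟨k₀, hk₀, rfl⟩ := Finset.mem_image.1 hk
      obtain ⟨l₀, hl₀, rfl⟩ := Finset.mem_image.1 hl
      exact ⟨i₀, k₀, j₀, l₀, hf.lt_iff_lt.1 hik, hf.lt_iff_lt.1 hkj, hf.lt_iff_lt.1 hjl,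
        Or.inl ⟨hi₀, hj₀, hk₀, hl₀⟩⟩
    · obtain ⟨i₀, hi₀, rfl⟩ := Finset.mem_image.1 hi
      obtain ⟨j₀, hj₀, rfl⟩ := Finset.mem_image.1 hj
      obtain ⟨k₀, hk₀, rfl⟩ := Finset.mem_image.1 hk
      obtain ⟨l₀, hl₀, rfl⟩ := Finset.mem_image.1 hl
      exact ⟨i₀, k₀, j₀, l₀, hf.lt_iff_lt.1 hik, hf.lt_iff_lt.1 hkj, hf.lt_iff_lt.1 hjl,
        Or.inr ⟨hi₀, hj₀, hk₀, hl₀⟩⟩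
  · rintro ⟨i, k, j, l, hik, hkj, hjl, hm⟩
    refine ⟨f i, f k, f j, f l, hf hik, hf hkj, hf hjl, ?_⟩
    rcases hm with ⟨hi, hj, hk, hl⟩ | ⟨hi, hj, hk, hl⟩
    · exact Or.inl ⟨Finset.mem_image_of_mem f hi, Finset.mem_image_of_mem f hj,
        Finset.mem_image_of_mem f hk, Finset.mem_image_of_mem f hl⟩
    · exact Or.inr ⟨Finset.mem_image_of_mem f hi, Finset.mem_image_of_mem f hj,
        Finset.mem_image_of_mem f hk, Finset.mem_image_of_mem f hl⟩

theorem crosses_up {A : Finset (Fin p)} {b b' : Finset (Fin A.card)} :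
    Crosses (up A b) (up A b') ↔ Crosses b b' :=
  crosses_image emb_strictMono

end Combinatorics

section Glue

variable {p : ℕ}

noncomputable def glue (σ : Finset (Finset (Fin p)))
    (q : ∀ A ∈ σ, Finset (Finset (Fin A.card))) : Finset (Finset (Fin p)) :=
  σ.attach.biUnion (fun A => (q A.1 A.2).image (up A.1))

theorem mem_glue {σ : Finset (Finset (Fin p))} {q : ∀ A ∈ σ, Finset (Finset (Fin A.card))}
    {B : Finset (Fin p)} :
    B ∈ glue σ q ↔ ∃ A : {A // A ∈ σ}, ∃ b ∈ q A.1 A.2, up A.1 b = B := by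
  unfold glue
  simp only [Finset.mem_biUnion, Finset.mem_attach, true_and, Finset.mem_image]

variable {σ : Finset (Finset (Fin p))} {q : ∀ A ∈ σ, Finset (Finset (Fin A.card))}

theorem glue_nocross (hσ2 : IsNoncrossing σ) {A A' : {A // A ∈ σ}} (hne : A.1 ≠ A'.1)
    {b : Finset (Fin A.1.card)} {b' : Finset (Fin A'.1.card)} :
    ¬ Crosses (up A.1 b) (up A'.1 b') :=
  fun h => hσ2 A.1 A.2 A'.1 A'.2 hne (h.mono up_subset up_subset)

theorem glue_isPairPartition (hσ1 : IsPartition σ)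
    (hq : ∀ A (hA : A ∈ σ), IsPairPartition (q A hA) ∧ (interGraph (q A hA)).Connected) :
    IsPairPartition (glue σ q) := by
  constructor
  · intro B hB
    obtain ⟨A, b, hb, rfl⟩ := mem_glue.1 hB
    rw [card_up]
    exact (hq A.1 A.2).1.1 b hb
  · intro i
    obtain ⟨A, ⟨hA, hiA⟩, hAuniq⟩ := hσ1.2 i
    obtain ⟨i₀, hi₀⟩ := emb_surj hiA
    obtain ⟨b, ⟨hb, hib⟩, hbuniq⟩ := (hq A hA).1.2 i₀
    refine ⟨up A b, ⟨mem_glue.2 ⟨⟨A, hA⟩, b, hb, rfl⟩, mem_up.2 ⟨i₀, hib, hi₀⟩⟩, ?_⟩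
    rintro B ⟨hB, hiB⟩
    obtain ⟨A', b', hb', rfl⟩ := mem_glue.1 hB
    have hA'A : A'.1 = A := hAuniq A'.1 ⟨A'.2, up_subset hiB⟩
    obtain ⟨A'', hA''⟩ := A'
    subst hA'A
    obtain ⟨i₁, hi₁b', hi₁⟩ := mem_up.1 hiB
    have : i₁ = i₀ := emb_inj (hi₁.trans hi₀.symm)
    subst this
    rw [hbuniq b' ⟨hb', hi₁b'⟩]

theorem reach_map_up {A : Finset (Fin p)} {hA : A ∈ σ}
    (hmem : ∀ b : {x // x ∈ q A hA}, up A b.1 ∈ glue σ q)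
    {b₀ b₁ : {x // x ∈ q A hA}} (h : (interGraph (q A hA)).Reachable b₀ b₁) :
    (interGraph (glue σ q)).Reachable ⟨up A b₀.1, hmem b₀⟩ ⟨up A b₁.1, hmem b₁⟩ := by
  rw [SimpleGraph.reachable_iff_reflTransGen] at h
  induction h with
  | refl => exact SimpleGraph.Reachable.refl _
  | @tail m e hr hadj ih =>
    refine ih.trans (SimpleGraph.Adj.reachable ?_)
    constructor
    · intro hEq
      exact hadj.1 (Subtype.ext (up_injective (congrArg Subtype.val hEq)))
    · exact crosses_up.2 hadj.2

theorem reach_glue_fiber (hσ2 : IsNoncrossing σ) {A : Finset (Fin p)} {hA : A ∈ σ}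
    {b : Finset (Fin A.card)} (hb : b ∈ q A hA) {hmem : up A b ∈ glue σ q}
    {C : {B // B ∈ glue σ q}}
    (h : (interGraph (glue σ q)).Reachable ⟨up A b, hmem⟩ C) :
    ∃ b' ∈ q A hA, up A b' = C.1 := by
  rw [SimpleGraph.reachable_iff_reflTransGen] at h
  induction h with
  | refl => exact ⟨b, hb, rfl⟩
  | @tail m e hr hadj ih =>
    obtain ⟨b', hb', hupb'⟩ := ih
    obtain ⟨A₂, b₂, hb₂, hupb₂⟩ := mem_glue.1 e.2
    have hcr : Crosses (up A b') (up A₂.1 b₂) := by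
      rw [hupb', hupb₂]
      exact hadj.2
    have hA₂ : A₂.1 = A := by
      by_contra hne
      exact glue_nocross (A := ⟨A, hA⟩) (A' := A₂) hσ2 (fun hh => hne hh.symm) hcr
    obtain ⟨A₂v, hA₂v⟩ := A₂
    subst hA₂
    exact ⟨b₂, hb₂, hupb₂⟩

theorem compUnion_glue (hσ1 : IsPartition σ) (hσ2 : IsNoncrossing σ)
    (hq : ∀ A (hA : A ∈ σ), IsPairPartition (q A hA) ∧ (interGraph (q A hA)).Connected)
    {A : Finset (Fin p)} {hA : A ∈ σ} {b : Finset (Fin A.card)} (hb : b ∈ q A hA)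
    {hmem : up A b ∈ glue σ q} :
    compUnion (glue σ q) ⟨up A b, hmem⟩ = A := by
  have hmem' : ∀ b' : {x // x ∈ q A hA}, up A b'.1 ∈ glue σ q :=
    fun b' => mem_glue.2 ⟨⟨A, hA⟩, b'.1, b'.2, rfl⟩
  ext x
  rw [mem_compUnion]
  constructor
  · rintro ⟨C, hR, hxC⟩
    obtain ⟨b', _, hupb'⟩ := reach_glue_fiber hσ2 hb hR
    rw [← hupb'] at hxC
    exact up_subset hxC
  · intro hx
    obtain ⟨i, rfl⟩ := emb_surj hx
    obtain ⟨b', ⟨hb', hib'⟩, _⟩ := (hq A hA).1.2 i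
    have hR := reach_map_up (σ := σ) (q := q) hmem' ((hq A hA).2.preconnected ⟨b, hb⟩ ⟨b', hb'⟩)
    exact ⟨⟨up A b', hmem' ⟨b', hb'⟩⟩, hR, mem_up.2 ⟨i, hib', rfl⟩⟩

theorem closure_glue (hσ1 : IsPartition σ) (hσ2 : IsNoncrossing σ)
    (hq : ∀ A (hA : A ∈ σ), IsPairPartition (q A hA) ∧ (interGraph (q A hA)).Connected) :
    closure (glue σ q) = σ := by
  ext A
  rw [mem_closure]
  constructor
  · rintro ⟨B, rfl⟩
    obtain ⟨A', b', hb', hupb'⟩ := mem_glue.1 B.2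
    have : (⟨up A'.1 b', mem_glue.2 ⟨A', b', hb', rfl⟩⟩ : {B // B ∈ glue σ q}) = B :=
      Subtype.ext hupb'
    rw [← this, compUnion_glue hσ1 hσ2 hq hb']
    exact A'.2
  · intro hA
    obtain ⟨⟨b, hb⟩⟩ := (hq A hA).2.nonempty
    exact ⟨⟨up A b, mem_glue.2 ⟨⟨A, hA⟩, b, hb, rfl⟩⟩, compUnion_glue hσ1 hσ2 hq hb⟩

theorem filter_glue (hσ1 : IsPartition σ)
    (hq : ∀ A (hA : A ∈ σ), IsPairPartition (q A hA) ∧ (interGraph (q A hA)).Connected)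
    (A : Finset (Fin p)) (hA : A ∈ σ) :
    (glue σ q).filter (fun B => B ⊆ A) = (q A hA).image (up A) := by
  ext B
  rw [Finset.mem_filter, Finset.mem_image]
  constructor
  · rintro ⟨hB, hBA⟩
    obtain ⟨A', b', hb', rfl⟩ := mem_glue.1 hB
    have hbne : (up A'.1 b').Nonempty := by
      rw [← Finset.card_pos, card_up, (hq A'.1 A'.2).1.1 b' hb']
      norm_num
    obtain ⟨x, hx⟩ := hbne
    have hA'A : A'.1 = A := block_eq_of_mem hσ1 A'.2 hA (up_subset hx) (hBA hx)
    obtain ⟨A'', hA''⟩ := A'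
    subst hA'A
    exact ⟨b', hb', rfl⟩
  · rintro ⟨b, hb, rfl⟩
    exact ⟨mem_glue.2 ⟨⟨A, hA⟩, b, hb, rfl⟩, up_subset⟩

/-! ### recovering the fiber pair partitions -/

noncomputable def qOf (P : Finset (Finset (Fin p))) (A : Finset (Fin p)) :
    Finset (Finset (Fin A.card)) :=
  (P.filter (fun B => B ⊆ A)).image (down A)

theorem mem_qOf {P : Finset (Finset (Fin p))} {A : Finset (Fin p)} {b : Finset (Fin A.card)} :
    b ∈ qOf P A ↔ ∃ B, (B ∈ P ∧ B ⊆ A) ∧ down A B = b := by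
  unfold qOf
  simp only [Finset.mem_image, Finset.mem_filter]

theorem qOf_isPairPartition {P : Finset (Finset (Fin p))} (hP : IsPairPartition P)
    (B₀ : {B // B ∈ P}) :
    IsPairPartition (qOf P (compUnion P B₀)) := by
  set A := compUnion P B₀ with hAdef
  constructor
  · intro b hb
    obtain ⟨B, ⟨hBP, hBA⟩, rfl⟩ := mem_qOf.1 hb
    have h1 := card_up (A := A) (down A B)
    rw [up_down hBA] at h1
    rw [← h1]
    exact hP.1 B hBP
  · intro i
    have hiA : emb A i ∈ A := emb_mem i
    obtain ⟨Bx, hRx, hxBx⟩ := mem_compUnion.1 hiA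
    have hBxA : Bx.1 ⊆ A := block_subset_compUnion hRx
    refine ⟨down A Bx.1, ⟨mem_qOf.2 ⟨Bx.1, ⟨Bx.2, hBxA⟩, rfl⟩, mem_down.2 hxBx⟩, ?_⟩
    rintro b ⟨hb, hib⟩
    obtain ⟨B', ⟨hB'P, hB'A⟩, rfl⟩ := mem_qOf.1 hb
    have : emb A i ∈ B' := mem_down.1 hib
    have hBeq : B' = Bx.1 := block_eq_of_mem hP.isPartition hB'P Bx.2 this hxBx
    rw [hBeq]

theorem reach_map_down {P : Finset (Finset (Fin p))} (hP : IsPartition P)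
    {B₀ Bs Bt : {B // B ∈ P}}
    (hs : (interGraph P).Reachable B₀ Bs) (ht : (interGraph P).Reachable B₀ Bt) :
    (interGraph (qOf P (compUnion P B₀))).Reachable
      ⟨down (compUnion P B₀) Bs.1,
        mem_qOf.2 ⟨Bs.1, ⟨Bs.2, block_subset_compUnion hs⟩, rfl⟩⟩
      ⟨down (compUnion P B₀) Bt.1,
        mem_qOf.2 ⟨Bt.1, ⟨Bt.2, block_subset_compUnion ht⟩, rfl⟩⟩ := by
  set A := compUnion P B₀ with hAdef
  let mkv : ∀ (B : {B // B ∈ P}), (interGraph P).Reachable B₀ B → {x // x ∈ qOf P A} :=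
    fun B h => ⟨down A B.1, mem_qOf.2 ⟨B.1, ⟨B.2, block_subset_compUnion h⟩, rfl⟩⟩
  have key : ∀ e : {B // B ∈ P}, Relation.ReflTransGen (interGraph P).Adj Bs e →
      ∀ he : (interGraph P).Reachable B₀ e,
      (interGraph (qOf P A)).Reachable (mkv Bs hs) (mkv e he) := by
    intro e h
    induction h with
    | refl => intro he; exact SimpleGraph.Reachable.refl _
    | @tail m e' hr hadj ih =>
      intro he'
      have hm : (interGraph P).Reachable B₀ m :=
        hs.trans ((SimpleGraph.reachable_iff_reflTransGen _ _).2 hr)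
      refine (ih hm).trans (SimpleGraph.Adj.reachable ?_)
      have hmA : m.1 ⊆ A := block_subset_compUnion hm
      have heA : e'.1 ⊆ A := block_subset_compUnion he'
      constructor
      · intro hEq
        apply hadj.1
        have h1 : down A m.1 = down A e'.1 := congrArg Subtype.val hEq
        have h2 := congrArg (up A) h1
        rw [up_down hmA, up_down heA] at h2
        exact Subtype.ext h2
      · have h3 := hadj.2
        rw [← up_down hmA, ← up_down heA] at h3
        exact crosses_up.1 h3
  exact key Bt ((SimpleGraph.reachable_iff_reflTransGen _ _).1 (hs.symm.trans ht)) ht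

theorem qOf_connected {P : Finset (Finset (Fin p))} (hP : IsPairPartition P)
    (B₀ : {B // B ∈ P}) :
    (interGraph (qOf P (compUnion P B₀))).Connected := by
  set A := compUnion P B₀ with hAdef
  rw [SimpleGraph.connected_iff]
  constructor
  · intro u v
    obtain ⟨Bu, ⟨hBuP, hBuA⟩, hu⟩ := mem_qOf.1 u.2
    obtain ⟨Bv, ⟨hBvP, hBvA⟩, hv⟩ := mem_qOf.1 v.2
    have hBune : Bu.Nonempty := hP.isPartition.1 Bu hBuP
    have hBvne : Bv.Nonempty := hP.isPartition.1 Bv hBvP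
    obtain ⟨x, hx⟩ := hBune
    obtain ⟨y, hy⟩ := hBvne
    have hRu : (interGraph P).Reachable B₀ ⟨Bu, hBuP⟩ :=
      reach_of_mem_compUnion hP.isPartition hx (hBuA hx)
    have hRv : (interGraph P).Reachable B₀ ⟨Bv, hBvP⟩ :=
      reach_of_mem_compUnion hP.isPartition hy (hBvA hy)
    have := reach_map_down hP.isPartition hRu hRv
    have hu' : (⟨down A Bu, mem_qOf.2 ⟨Bu, ⟨hBuP, hBuA⟩, rfl⟩⟩ : {x // x ∈ qOf P A}) = u :=
      Subtype.ext hu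
    have hv' : (⟨down A Bv, mem_qOf.2 ⟨Bv, ⟨hBvP, hBvA⟩, rfl⟩⟩ : {x // x ∈ qOf P A}) = v :=
      Subtype.ext hv
    rwa [hu', hv'] at this
  · have hBne : B₀.1.Nonempty := hP.isPartition.1 B₀.1 B₀.2
    exact ⟨⟨down A B₀.1, mem_qOf.2 ⟨B₀.1,
      ⟨B₀.2, self_subset_compUnion B₀⟩, rfl⟩⟩⟩

theorem glue_qOf {P : Finset (Finset (Fin p))} (hP : IsPairPartition P) :
    glue (closure P) (fun A _ => qOf P A) = P := by
  ext B
  rw [mem_glue]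
  constructor
  · rintro ⟨A, b, hb, rfl⟩
    obtain ⟨B', ⟨hB'P, hB'A⟩, rfl⟩ := mem_qOf.1 hb
    rwa [up_down hB'A]
  · intro hB
    have hself := self_subset_compUnion (⟨B, hB⟩ : {B // B ∈ P})
    refine ⟨⟨compUnion P ⟨B, hB⟩, mem_closure.2 ⟨⟨B, hB⟩, rfl⟩⟩, down (compUnion P ⟨B, hB⟩) B,
      mem_qOf.2 ⟨B, ⟨hB, hself⟩, rfl⟩, ?_⟩
    exact up_down hself

end Glue

theorem densInt_inst_irrel {V : Type*} (i1 i2 : Fintype V) (G : SimpleGraph V)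
    (w : ℝ → ℝ → ℝ) : @densInt V i1 G w = @densInt V i2 G w := by
  congr 1
  exact Subsingleton.elim _ _

theorem densInt_fiber_prod {V ι : Type} [Fintype V] [Fintype ι] (c : V → ι) (G : SimpleGraph V)
    (hedge : ∀ u v, G.Adj u v → c u = c v) (w : ℝ → ℝ → ℝ) :
    densInt G w = ∏ a : ι, densInt (G.comap (Subtype.val : {v // c v = a} → V)) w := by
  rw [densInt]
  have h1 : ∀ x : V → ℝ, edgeProd G (fun u v => w (x u) (x v)) =
      ∏ a ∈ (Finset.univ : Finset ι), (fun (a : ι) (y : {v // c v = a} → ℝ) =>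
        edgeProd (G.comap (Subtype.val : {v // c v = a} → V)) (fun u v => w (y u) (y v))) a
        (fun v => x v.1) :=
    fun x => edgeProd_sigma c G hedge _
  simp_rw [h1]
  refine Eq.trans (split_integral Finset.univ V c (fun v => Finset.mem_univ _)
    (fun a y => edgeProd (G.comap (Subtype.val : {v // c v = a} → V))
      (fun u v => w (y u) (y v)))) ?_
  exact Finset.prod_congr rfl fun a _ => rfl

theorem density_glue {p : ℕ} (w : ℝ → ℝ → ℝ) (σ : Finset (Finset (Fin p)))
    (hσ1 : IsPartition σ) (hσ2 : IsNoncrossing σ)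
    (q : ∀ A ∈ σ, Finset (Finset (Fin A.card)))
    (hq : ∀ A (hA : A ∈ σ), IsPairPartition (q A hA) ∧ (interGraph (q A hA)).Connected) :
    density (interGraph (glue σ q)) w = ∏ A ∈ σ.attach, density (interGraph (q A.1 A.2)) w := by
  classical
  have hdec : ∀ B : {B // B ∈ glue σ q}, ∃ A : {A // A ∈ σ}, ∃ b ∈ q A.1 A.2, up A.1 b = B.1 :=
    fun B => mem_glue.1 B.2
  choose Af bf hbf hup using hdec
  have hsub : ∀ B : {B // B ∈ glue σ q}, B.1 ⊆ (Af B).1 := fun B => (hup B) ▸ up_subset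
  have hedge : ∀ u v : {B // B ∈ glue σ q}, (interGraph (glue σ q)).Adj u v → Af u = Af v := by
    intro u v hadj
    by_contra hc
    exact hσ2 (Af u).1 (Af u).2 (Af v).1 (Af v).2 (fun h => hc (Subtype.ext h))
      (hadj.2.mono (hsub u) (hsub v))
  rw [density_eq_densInt, densInt_fiber_prod Af (interGraph (glue σ q)) hedge w,
    Finset.univ_eq_attach]
  refine Finset.prod_congr rfl fun A _ => ?_
  rw [density_eq_densInt]
  have hmemP : ∀ b ∈ q A.1 A.2, up A.1 b ∈ glue σ q := fun b hb => mem_glue.2 ⟨A, b, hb, rfl⟩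
  have hAeq : ∀ (X : {B // B ∈ glue σ q}) (b : Finset (Fin A.1.card)),
      b ∈ q A.1 A.2 → X.1 = up A.1 b → Af X = A := by
    intro X b hb hX
    have hbne : b.Nonempty := by
      rw [← Finset.card_pos, (hq A.1 A.2).1.1 b hb]
      norm_num
    obtain ⟨i, hi⟩ := hbne
    have hx1 : emb A.1 i ∈ X.1 := by
      rw [hX]
      exact mem_up.2 ⟨i, hi, rfl⟩
    have hx2 : emb A.1 i ∈ A.1 := emb_mem i
    have hx3 : emb A.1 i ∈ (Af X).1 := hsub X hx1
    exact Subtype.ext (block_eq_of_mem hσ1 (Af X).2 A.2 hx3 hx2)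
  let e : {b // b ∈ q A.1 A.2} → {B : {B // B ∈ glue σ q} // Af B = A} := fun b =>
    ⟨⟨up A.1 b.1, hmemP b.1 b.2⟩, hAeq _ b.1 b.2 rfl⟩
  have hbij : Function.Bijective e := by
    constructor
    · intro b b' h
      have h1 : up A.1 b.1 = up A.1 b'.1 := congrArg (fun z => z.1.1) h
      exact Subtype.ext (up_injective h1)
    · rintro ⟨B, hB⟩
      have hBA : B.1 ⊆ A.1 := by
        have := hsub B
        rw [hB] at this
        exact this
      have hBfil : B.1 ∈ (glue σ q).filter (fun C => C ⊆ A.1) :=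
        Finset.mem_filter.2 ⟨B.2, hBA⟩
      rw [filter_glue hσ1 hq A.1 A.2, Finset.mem_image] at hBfil
      obtain ⟨b, hb, hupb⟩ := hBfil
      exact ⟨⟨b, hb⟩, Subtype.ext (Subtype.ext hupb)⟩
  let E := Equiv.ofBijective e hbij
  have hgraph : interGraph (q A.1 A.2) =
      ((interGraph (glue σ q)).comap
        (Subtype.val : {B : {B // B ∈ glue σ q} // Af B = A} → {B // B ∈ glue σ q})).comap E := by
    ext b b'
    show (b ≠ b' ∧ Crosses b.1 b'.1) ↔
      ((⟨up A.1 b.1, hmemP b.1 b.2⟩ : {B // B ∈ glue σ q}) ≠ ⟨up A.1 b'.1, hmemP b'.1 b'.2⟩ ∧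
        Crosses (up A.1 b.1) (up A.1 b'.1))
    constructor
    · rintro ⟨hne, hcr⟩
      refine ⟨?_, crosses_up.2 hcr⟩
      intro h
      exact hne (Subtype.ext (up_injective (congrArg Subtype.val h)))
    · rintro ⟨hne, hcr⟩
      refine ⟨?_, crosses_up.1 hcr⟩
      rintro rfl
      exact hne rfl
  rw [hgraph, densInt_comap]
  exact densInt_inst_irrel _ _ _ _


theorem mem_pairPartitions {m : ℕ} {P : Finset (Finset (Fin m))} :
    P ∈ pairPartitions m ↔ IsPairPartition P := by
  simp [pairPartitions]

/-- **Proposition 2.1 (free cumulants of `μ_w`).**  The moments `Σ_{π ∈ P₂(p)} ρ(f_π, w)` of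
`μ_w` decompose over noncrossing partitions as
`Σ_{σ ∈ NC(p)} ∏_{V ∈ σ} κ_{|V|}(w)`, i.e. the `κ_m(w)` are the free cumulants of `μ_w`. -/
theorem free_cumulants_of_graphon_moments
    (w : ℝ → ℝ → ℝ)
    (hw_meas : Measurable (Function.uncurry w))
    (hw_symm : ∀ x y : ℝ, w x y = w y x)
    (hw_mem : ∀ x y : ℝ, w x y ∈ Set.Icc (0:ℝ) 1)
    (p : ℕ) :
    momentFormula p w =
      ∑ σ ∈ Finset.univ.filter
          (fun σ : Finset (Finset (Fin p)) => IsPartition σ ∧ IsNoncrossing σ),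
        ∏ B ∈ σ, connectedPairMoment B.card w := by
  classical
  set t : ∀ A : Finset (Fin p), Finset (Finset (Finset (Fin A.card))) := fun A =>
    (pairPartitions A.card).filter (fun Q => (interGraph Q).Connected) with ht
  have hRHS : ∀ σ : Finset (Finset (Fin p)),
      (∏ B ∈ σ, connectedPairMoment B.card w) =
      ∑ q ∈ σ.pi t, ∏ A ∈ σ.attach, density (interGraph (q A.1 A.2)) w :=
    fun σ => Finset.prod_sum σ t (fun A Q => density (interGraph Q) w)
  have h2 : (∑ σ ∈ Finset.univ.filter
        (fun σ : Finset (Finset (Fin p)) => IsPartition σ ∧ IsNoncrossing σ),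
        ∏ B ∈ σ, connectedPairMoment B.card w) =
      ∑ x ∈ (Finset.univ.filter
        (fun σ : Finset (Finset (Fin p)) => IsPartition σ ∧ IsNoncrossing σ)).sigma
          (fun σ => σ.pi t),
        ∏ A ∈ x.1.attach, density (interGraph (x.2 A.1 A.2)) w := by
    rw [Finset.sum_sigma]
    exact Finset.sum_congr rfl fun σ _ => hRHS σ
  rw [h2, momentFormula]
  symm
  refine Finset.sum_bij (fun x _ => glue x.1 x.2) ?_ ?_ ?_ ?_
  · rintro ⟨σ, q⟩ hx
    obtain ⟨hσ, hq⟩ := Finset.mem_sigma.1 hx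
    obtain ⟨-, hσ1, hσ2⟩ := Finset.mem_filter.1 hσ
    have hq' : ∀ A (hA : A ∈ σ), IsPairPartition (q A hA) ∧ (interGraph (q A hA)).Connected := by
      intro A hA
      have := Finset.mem_pi.1 hq A hA
      rw [ht, Finset.mem_filter, mem_pairPartitions] at this
      exact this
    exact mem_pairPartitions.2 (glue_isPairPartition hσ1 hq')
  · rintro ⟨σ1, q1⟩ hx1 ⟨σ2, q2⟩ hx2 h
    obtain ⟨hσa, hqa⟩ := Finset.mem_sigma.1 hx1
    obtain ⟨-, hσ11, hσ12⟩ := Finset.mem_filter.1 hσa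
    obtain ⟨hσb, hqb⟩ := Finset.mem_sigma.1 hx2
    obtain ⟨-, hσ21, hσ22⟩ := Finset.mem_filter.1 hσb
    have hq1' : ∀ A (hA : A ∈ σ1), IsPairPartition (q1 A hA) ∧
        (interGraph (q1 A hA)).Connected := by
      intro A hA
      have := Finset.mem_pi.1 hqa A hA
      rw [ht, Finset.mem_filter, mem_pairPartitions] at this
      exact this
    have hq2' : ∀ A (hA : A ∈ σ2), IsPairPartition (q2 A hA) ∧
        (interGraph (q2 A hA)).Connected := by
      intro A hA
      have := Finset.mem_pi.1 hqb A hA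
      rw [ht, Finset.mem_filter, mem_pairPartitions] at this
      exact this
    have h' : glue σ1 q1 = glue σ2 q2 := h
    have hσeq : σ1 = σ2 :=
      (closure_glue hσ11 hσ12 hq1').symm.trans
        (by rw [h']; exact closure_glue hσ21 hσ22 hq2')
    subst hσeq
    have hqeq : q1 = q2 := by
      funext A hA
      have himg : (q1 A hA).image (up A) = (q2 A hA).image (up A) := by
        rw [← filter_glue hσ11 hq1' A hA, ← filter_glue hσ21 hq2' A hA, h']
      ext b
      constructor
      · intro hb
        have hmem : up A b ∈ (q2 A hA).image (up A) := by
          rw [← himg]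
          exact Finset.mem_image_of_mem _ hb
        obtain ⟨b', hb', hb'eq⟩ := Finset.mem_image.1 hmem
        rwa [← up_injective hb'eq]
      · intro hb
        have hmem : up A b ∈ (q1 A hA).image (up A) := by
          rw [himg]
          exact Finset.mem_image_of_mem _ hb
        obtain ⟨b', hb', hb'eq⟩ := Finset.mem_image.1 hmem
        rwa [← up_injective hb'eq]
    rw [hqeq]
  · intro P hP
    have hP' : IsPairPartition P := mem_pairPartitions.1 hP
    refine ⟨⟨closure P, fun A _ => qOf P A⟩, ?_, glue_qOf hP'⟩
    refine Finset.mem_sigma.2 ⟨Finset.mem_filter.2 ⟨Finset.mem_univ _,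
      closure_isPartition hP'.isPartition, closure_noncrossing hP'.isPartition⟩, ?_⟩
    refine Finset.mem_pi.2 fun A hA => ?_
    obtain ⟨B₀, rfl⟩ := mem_closure.1 hA
    rw [ht, Finset.mem_filter, mem_pairPartitions]
    exact ⟨qOf_isPairPartition hP' B₀, qOf_connected hP' B₀⟩
  · rintro ⟨σ, q⟩ hx
    obtain ⟨hσ, hq⟩ := Finset.mem_sigma.1 hx
    obtain ⟨-, hσ1, hσ2⟩ := Finset.mem_filter.1 hσ
    have hq' : ∀ A (hA : A ∈ σ), IsPairPartition (q A hA) ∧ (interGraph (q A hA)).Connected := by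
      intro A hA
      have := Finset.mem_pi.1 hq A hA
      rw [ht, Finset.mem_filter, mem_pairPartitions] at this
      exact this
    exact (density_glue w σ hσ1 hσ2 q hq').symm

end
end EpsCLT
end
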